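/- Let n ≥ 3. If the complete graph K_n admits a deque layout with k deques, then k ≥ (n² − 3n + 2)/(4n − 10). -/

import Mathlib

namespace DequePaper

/-- The four possible types of an edge in a deque: head-head, tail-tail,
head-tail and tail-head. -/
inductive EdgeType : Type
  | hh | tt | ht | th
  deriving DecidableEq

variable {V : Type} [LinearOrder V]

/-- Edges `(u,v)` and `(u',v')` (with `u ≺ v`, `u' ≺ v'`) cross:
`u ≺ u' ≺ v ≺ v'`. -/
def Cross (e e' : V × V) : Prop :=
  e.1 < e'.1 ∧ e'.1 < e.2 ∧ e.2 < e'.2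

/-- Edges `(u,v)` and `(u',v')` nest: `u ≺ u' ≺ v' ≺ v`. -/
def Nest (e e' : V × V) : Prop :=
  e.1 < e'.1 ∧ e'.1 < e'.2 ∧ e'.2 < e.2

/-- A set of edges is a stack iff no two of its edges cross. -/
def IsStack (E : Set (V × V)) : Prop :=
  ∀ e ∈ E, ∀ e' ∈ E, ¬ Cross e e'

/-- A set of edges is a queue iff no two of its edges nest. -/
def IsQueue (E : Set (V × V)) : Prop :=
  ∀ e ∈ E, ∀ e' ∈ E, ¬ Nest e e'

/-- A set of edges is a rique iff it contains no three edges
`(a,a')`, `(b,b')`, `(c,c')` with `a ≺ b ≺ c ≺ b'`, `b' ≺ a'` and `b' ≺ c'`. -/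
def IsRique (E : Set (V × V)) : Prop :=
  ¬ ∃ a a' b b' c c' : V, (a, a') ∈ E ∧ (b, b') ∈ E ∧ (c, c') ∈ E ∧
      a < b ∧ b < c ∧ c < b' ∧ b' < a' ∧ b' < c'

/-- The extension of the vertex order: all vertices, followed by the
wrap points (modelled by natural numbers), each wrap point lying strictly
after every vertex. -/
abbrev Ext (V : Type) := V ⊕ₗ ℕ

/-- A vertex, viewed in the extended order. -/
def vtx (v : V) : Ext V := toLex (Sum.inl v)

/-- A wrap point, viewed in the extended order. -/
def wpt (m : ℕ) : Ext V := toLex (Sum.inr m)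

/-- The interval of an edge in the upper family: `[u,v]` for an hh edge,
`[u,p(e)]` for an ht edge, `[v,p(e)]` for a th edge, nothing for a tt edge. -/
def upperIv (typ : V × V → EdgeType) (wrap : V × V → ℕ) (e : V × V) :
    Option (Ext V × Ext V) :=
  match typ e with
  | EdgeType.hh => some (vtx e.1, vtx e.2)
  | EdgeType.ht => some (vtx e.1, wpt (wrap e))
  | EdgeType.th => some (vtx e.2, wpt (wrap e))
  | EdgeType.tt => none

/-- The interval of an edge in the lower family: `[u,v]` for a tt edge,
`[v,p(e)]` for an ht edge, `[u,p(e)]` for a th edge, nothing for an hh edge. -/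
def lowerIv (typ : V × V → EdgeType) (wrap : V × V → ℕ) (e : V × V) :
    Option (Ext V × Ext V) :=
  match typ e with
  | EdgeType.tt => some (vtx e.1, vtx e.2)
  | EdgeType.ht => some (vtx e.2, wpt (wrap e))
  | EdgeType.th => some (vtx e.1, wpt (wrap e))
  | EdgeType.hh => none

/-- Two intervals `[x,y]` and `[x',y']` of the extended order cross:
`x ≺ x' ≺ y ≺ y'`. -/
def IvCross (i i' : Ext V × Ext V) : Prop :=
  i.1 < i'.1 ∧ i'.1 < i.2 ∧ i.2 < i'.2

/-- A family of intervals (one for each edge of `E` on which `iv` is defined)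
is pairwise non-crossing. -/
def FamilyNonCrossing (E : Set (V × V)) (iv : V × V → Option (Ext V × Ext V)) : Prop :=
  ∀ e ∈ E, ∀ e' ∈ E, ∀ i ∈ iv e, ∀ i' ∈ iv e', ¬ IvCross i i'

/-- `typ` and `wrap` form a witnessing type assignment for the edge set `E`
being a deque: wrap points are assigned injectively to the ht/th edges, and
both the upper and the lower families of intervals are pairwise non-crossing. -/
def IsDequeWitness (E : Set (V × V)) (typ : V × V → EdgeType) (wrap : V × V → ℕ) : Prop :=
  (∀ e ∈ E, ∀ e' ∈ E, (typ e = EdgeType.ht ∨ typ e = EdgeType.th) →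
      (typ e' = EdgeType.ht ∨ typ e' = EdgeType.th) → wrap e = wrap e' → e = e') ∧
  FamilyNonCrossing E (upperIv typ wrap) ∧
  FamilyNonCrossing E (lowerIv typ wrap)

/-- A set of edges is a deque iff it admits a witnessing type assignment. -/
def IsDeque (E : Set (V × V)) : Prop :=
  ∃ typ wrap, IsDequeWitness E typ wrap

/-- The edges of a graph `G`, written as ordered pairs with respect to the
vertex order given by the order embedding `f` into `ℕ`. -/
def orderedEdges {W : Type} (G : SimpleGraph W) (f : W ↪ ℕ) : Set (ℕ × ℕ) :=
  {p | ∃ u v, G.Adj u v ∧ f u = p.1 ∧ f v = p.2 ∧ p.1 < p.2}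

/-- `G` admits a layout with `k` pages, each page satisfying `P`:
a vertex order (injection into `ℕ`) together with a partition of the
edges into `k` parts (given by the colouring `c`), each part satisfying `P`. -/
def HasLayout {W : Type} (G : SimpleGraph W) (k : ℕ)
    (P : Set (ℕ × ℕ) → Prop) : Prop :=
  ∃ (f : W ↪ ℕ) (c : ℕ × ℕ → Fin k),
    ∀ i : Fin k, P {p | p ∈ orderedEdges G f ∧ c p = i}

/-- `G` admits a `k`-stack layout. -/
def HasStackLayout {W : Type} (G : SimpleGraph W) (k : ℕ) : Prop :=
  HasLayout G k IsStack

/-- `G` admits a `k`-queue layout. -/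
def HasQueueLayout {W : Type} (G : SimpleGraph W) (k : ℕ) : Prop :=
  HasLayout G k IsQueue

/-- `G` admits a `k`-rique layout. -/
def HasRiqueLayout {W : Type} (G : SimpleGraph W) (k : ℕ) : Prop :=
  HasLayout G k IsRique

/-- `G` admits a `k`-deque layout. -/
def HasDequeLayout {W : Type} (G : SimpleGraph W) (k : ℕ) : Prop :=
  HasLayout G k IsDeque

/-- The stack-number of `G`. -/
noncomputable def stackNumber {W : Type} (G : SimpleGraph W) : ℕ :=
  sInf {k | HasStackLayout G k}

/-- The queue-number of `G`. -/
noncomputable def queueNumber {W : Type} (G : SimpleGraph W) : ℕ :=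
  sInf {k | HasQueueLayout G k}

/-- The rique-number of `G`. -/
noncomputable def riqueNumber {W : Type} (G : SimpleGraph W) : ℕ :=
  sInf {k | HasRiqueLayout G k}

/-- The deque-number of `G`. -/
noncomputable def dequeNumber {W : Type} (G : SimpleGraph W) : ℕ :=
  sInf {k | HasDequeLayout G k}

namespace DequeAux

open Finset

abbrev PairN := ℕ × ℕ

def spn (n : ℕ) : Finset PairN := (Finset.range (n-1)).image (fun i => (i, i+1))

lemma mem_spn {n x : ℕ} (h : x + 1 ≤ n - 1) : (x, x+1) ∈ spn n := by
  simp only [spn, mem_image, mem_range]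
  exact ⟨x, by omega, rfl⟩

lemma spn_spec {n : ℕ} {g : PairN} (h : g ∈ spn n) : g.2 = g.1 + 1 ∧ g.2 ≤ n - 1 := by
  simp only [spn, mem_image, mem_range] at h
  obtain ⟨i, hi, rfl⟩ := h
  exact ⟨rfl, by omega⟩

def maxIn (T : Finset PairN) : Finset PairN :=
  T.filter (fun g => ∀ f ∈ T, f.1 ≤ g.1 → g.2 ≤ f.2 → f = g)

lemma maxIn_subset {T : Finset PairN} : maxIn T ⊆ T := filter_subset _ _

lemma mem_maxIn {T : Finset PairN} {g : PairN} :
    g ∈ maxIn T ↔ g ∈ T ∧ ∀ f ∈ T, f.1 ≤ g.1 → g.2 ≤ f.2 → f = g := by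
  simp [maxIn]

lemma exists_max_above {T : Finset PairN} (hT : ∀ e ∈ T, e.1 < e.2) {x : PairN} (hx : x ∈ T) :
    ∃ g ∈ maxIn T, g.1 ≤ x.1 ∧ x.2 ≤ g.2 := by
  classical
  have hne : (T.filter (fun f => f.1 ≤ x.1 ∧ x.2 ≤ f.2)).Nonempty := ⟨x, by simp [hx]⟩
  obtain ⟨g, hg, hmax⟩ :=
    (T.filter (fun f => f.1 ≤ x.1 ∧ x.2 ≤ f.2)).exists_max_image (fun f => f.2 - f.1) hne
  simp only [mem_filter] at hg
  refine ⟨g, mem_maxIn.mpr ⟨hg.1, ?_⟩, hg.2.1, hg.2.2⟩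
  intro f hf h1 h2
  have hfm : f ∈ T.filter (fun f => f.1 ≤ x.1 ∧ x.2 ≤ f.2) := by
    simp only [mem_filter]
    exact ⟨hf, le_trans h1 hg.2.1, le_trans hg.2.2 h2⟩
  have hw := hmax f hfm
  have hg2 := hT g hg.1
  have hcomp : f.1 = g.1 ∧ f.2 = g.2 := by omega
  exact Prod.ext hcomp.1 hcomp.2

def tup (n : ℕ) (F : Finset PairN) : Finset PairN := F ∪ spn n
def env (n : ℕ) (F : Finset PairN) : Finset PairN := maxIn (tup n F)
def bel (n : ℕ) (F : Finset PairN) (α : PairN) : Finset PairN :=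
  (tup n F).filter (fun g => α.1 ≤ g.1 ∧ g.2 ≤ α.2 ∧ g ≠ α)
def mx (n : ℕ) (F : Finset PairN) (α : PairN) : Finset PairN := maxIn (bel n F α)

/-- range/long condition for a side family -/
def Rng (n : ℕ) (F : Finset PairN) : Prop := ∀ e ∈ F, e.1 + 2 ≤ e.2 ∧ e.2 ≤ n - 1

lemma bel_subset {n F α} : bel n F α ⊆ tup n F := filter_subset _ _

lemma mx_subset_tup {n F α} : mx n F α ⊆ tup n F :=
  fun _ h => bel_subset (maxIn_subset h)

lemma tup_spec {n F} (hF : Rng n F) : ∀ g ∈ tup n F, g.1 < g.2 ∧ g.2 ≤ n - 1 := by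
  intro g hg
  rcases mem_union.mp hg with h | h
  · have := hF g h; omega
  · have := spn_spec h; omega

lemma card_spn (n : ℕ) : (spn n).card = n - 1 := by
  rw [spn, Finset.card_image_of_injective _ (fun a b hab => by simpa using congrArg Prod.fst hab),
    card_range]

lemma card_tup {n F} (hF : Rng n F) : (tup n F).card = n - 1 + F.card := by
  have hdis : Disjoint F (spn n) := by
    rw [disjoint_left]; intro g hgF hgS
    have h1 := hF g hgF; have h2 := spn_spec hgS; omega
  rw [tup, card_union_of_disjoint hdis, card_spn]; omega

lemma mx_two {n F} {α : PairN} (hF : Rng n F) (hα : α ∈ F) : 2 ≤ (mx n F α).card := by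
  obtain ⟨h1, h2⟩ := hF α hα
  have hbT : ∀ e ∈ bel n F α, e.1 < e.2 := fun e he => (tup_spec hF e (bel_subset he)).1
  have hs1 : ((α.1, α.1+1) : PairN) ∈ bel n F α := by
    rw [bel, mem_filter]
    refine ⟨mem_union_right _ (mem_spn (by omega)), le_rfl, by show α.1 + 1 ≤ α.2; omega, ?_⟩
    intro hEq
    have h3 : α.1 + 1 = α.2 := congrArg Prod.snd hEq
    omega
  have hs2 : ((α.2 - 1, α.2) : PairN) ∈ bel n F α := by
    rw [bel, mem_filter]
    refine ⟨?_, by show α.1 ≤ α.2 - 1; omega, le_rfl, ?_⟩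
    · have h := mem_spn (n := n) (x := α.2 - 1) (by omega)
      rw [show α.2 - 1 + 1 = α.2 by omega] at h
      exact mem_union_right _ h
    · intro hEq
      have h3 : α.2 - 1 = α.1 := congrArg Prod.fst hEq
      omega
  obtain ⟨g1, hg1, hg1a, hg1b⟩ := exists_max_above hbT hs1
  obtain ⟨g2, hg2, hg2a, hg2b⟩ := exists_max_above hbT hs2
  have hg1a' : g1.1 ≤ α.1 := hg1a
  have hg1b' : α.1 + 1 ≤ g1.2 := hg1b
  have hg2a' : g2.1 ≤ α.2 - 1 := hg2a
  have hg2b' : α.2 ≤ g2.2 := hg2b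
  have hne : g1 ≠ g2 := by
    intro hEq
    rw [← hEq] at hg2a' hg2b'
    have hb := (mem_maxIn.mp hg1).1
    rw [bel, mem_filter] at hb
    obtain ⟨-, hb1, hb2, hb3⟩ := hb
    exact hb3 (Prod.ext (by omega) (by omega))
  exact Finset.one_lt_card.mpr ⟨g1, hg1, g2, hg2, hne⟩

lemma mx_ne_env {n F} {α g : PairN} (hα : α ∈ F) (hg : g ∈ mx n F α) : g ∉ env n F := by
  intro hE
  have hbelg := (mem_maxIn.mp hg).1
  rw [bel, mem_filter] at hbelg
  obtain ⟨hgT, hb1, hb2, hb3⟩ := hbelg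
  exact hb3 ((mem_maxIn.mp hE).2 α (mem_union_left _ hα) hb1 hb2).symm

lemma mx_disj {n F} (hF : Rng n F)
    (hcross : ∀ α ∈ F, ∀ α' ∈ F, ¬(α.1 < α'.1 ∧ α'.1 < α.2 ∧ α.2 < α'.2))
    {α α' : PairN} (hα : α ∈ F) (hα' : α' ∈ F) (hne : α ≠ α') :
    Disjoint (mx n F α) (mx n F α') := by
  rw [disjoint_left]
  intro g hg hg'
  have h1 := mem_maxIn.mp hg
  have h2 := mem_maxIn.mp hg'
  have hb1 := h1.1; rw [bel, mem_filter] at hb1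
  have hb2 := h2.1; rw [bel, mem_filter] at hb2
  obtain ⟨hgT, ha1, ha2, ha3⟩ := hb1
  obtain ⟨-, hc1, hc2, hc3⟩ := hb2
  have hglt : g.1 < g.2 := by
    rcases mem_union.mp hgT with h | h
    · have := hF g h; omega
    · have := spn_spec h; omega
  rcases lt_trichotomy α.1 α'.1 with h | h | h
  · -- α.1 < α'.1 : α' nested in α
    have hcr := hcross α hα α' hα'
    have hnest : α'.2 ≤ α.2 := by omega
    have : α' ∈ bel n F α := by
      rw [bel, mem_filter]
      exact ⟨mem_union_left _ hα', by omega, hnest, fun hq => hne hq.symm⟩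
    exact hc3 (h1.2 α' this hc1 hc2).symm
  · -- equal left ends
    rcases lt_trichotomy α.2 α'.2 with h2' | h2' | h2'
    · have : α ∈ bel n F α' := by
        rw [bel, mem_filter]
        exact ⟨mem_union_left _ hα, by omega, by omega, hne⟩
      exact ha3 (h2.2 α this ha1 ha2).symm
    · exact hne (Prod.ext h h2')
    · have : α' ∈ bel n F α := by
        rw [bel, mem_filter]
        exact ⟨mem_union_left _ hα', by omega, by omega, fun hq => hne hq.symm⟩
      exact hc3 (h1.2 α' this hc1 hc2).symm
  · have hcr := hcross α' hα' α hα
    have hnest : α.2 ≤ α'.2 := by omega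
    have : α ∈ bel n F α' := by
      rw [bel, mem_filter]
      exact ⟨mem_union_left _ hα, by omega, hnest, hne⟩
    exact ha3 (h2.2 α this ha1 ha2).symm

lemma env_witness {n F} (hF : Rng n F) {x y : ℕ} (hxy : x < y) (hyn : y ≤ n - 1)
    (hx : x = 0 ∨ ∀ g ∈ tup n F, ¬(g.1 < x ∧ x < g.2))
    (hy : y = n - 1 ∨ ∀ g ∈ tup n F, ¬(g.1 < y ∧ y < g.2)) :
    ∃ g ∈ env n F, x ≤ g.1 ∧ g.2 ≤ y := by
  have hsp : ((x, x+1) : PairN) ∈ tup n F := mem_union_right _ (mem_spn (by omega))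
  obtain ⟨g, hgenv, hga, hgb⟩ := exists_max_above (fun e he => (tup_spec hF e he).1) hsp
  have hga' : g.1 ≤ x := hga
  have hgb' : x + 1 ≤ g.2 := hgb
  have hgT := tup_spec hF g (maxIn_subset hgenv)
  refine ⟨g, hgenv, ?_, ?_⟩
  · rcases hx with rfl | hap
    · omega
    · by_contra hcon
      exact hap g (maxIn_subset hgenv) ⟨by omega, by omega⟩
  · rcases hy with rfl | hap
    · omega
    · by_contra hcon
      exact hap g (maxIn_subset hgenv) ⟨by omega, by omega⟩

lemma env_witness₂R {n F} (hF : Rng n F) {x : ℕ} (hx2 : x + 2 ≤ n - 1)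
    (hxap : ∀ g ∈ tup n F, ¬(g.1 < x ∧ x < g.2))
    (hpair : ((x, n-1) : PairN) ∉ F) :
    2 ≤ ((env n F).filter (fun g => x ≤ g.1 ∧ g.2 ≤ n - 1)).card := by
  classical
  have hmxT : ∀ e ∈ tup n F, e.1 < e.2 := fun e he => (tup_spec hF e he).1
  have hsp1 : ((x, x+1) : PairN) ∈ tup n F := mem_union_right _ (mem_spn (by omega))
  have hsp2 : ((n-2, n-1) : PairN) ∈ tup n F := by
    have h := mem_spn (n := n) (x := n-2) (by omega)
    rw [show n - 2 + 1 = n - 1 by omega] at h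
    exact mem_union_right _ h
  obtain ⟨g1, hg1, h1a, h1b⟩ := exists_max_above hmxT hsp1
  obtain ⟨g2, hg2, h2a, h2b⟩ := exists_max_above hmxT hsp2
  have hg1T := tup_spec hF g1 (maxIn_subset hg1)
  have hg2T := tup_spec hF g2 (maxIn_subset hg2)
  have h1a' : g1.1 ≤ x := h1a
  have h1b' : x + 1 ≤ g1.2 := h1b
  have h2a' : g2.1 ≤ n - 2 := h2a
  have h2b' : n - 1 ≤ g2.2 := h2b
  have hg1x : g1.1 = x := by
    by_contra hcon
    exact hxap g1 (maxIn_subset hg1) ⟨by omega, by omega⟩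
  have hg2x : x ≤ g2.1 := by
    by_contra hcon
    exact hxap g2 (maxIn_subset hg2) ⟨by omega, by omega⟩
  have hne : g1 ≠ g2 := by
    intro hEq
    rw [← hEq] at h2a' h2b'
    have hg1pair : g1 = ((x, n-1) : PairN) := Prod.ext (by omega) (by omega)
    rcases mem_union.mp (maxIn_subset hg1) with hcmem | hcmem
    · rw [hg1pair] at hcmem; exact hpair hcmem
    · have := spn_spec hcmem; omega
  have m1 : g1 ∈ (env n F).filter (fun g => x ≤ g.1 ∧ g.2 ≤ n - 1) :=
    mem_filter.mpr ⟨hg1, by omega⟩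
  have m2 : g2 ∈ (env n F).filter (fun g => x ≤ g.1 ∧ g.2 ≤ n - 1) :=
    mem_filter.mpr ⟨hg2, by omega⟩
  exact Finset.one_lt_card.mpr ⟨g1, m1, g2, m2, hne⟩

lemma env_witness₂L {n F} (hF : Rng n F) {y : ℕ} (hy2 : 2 ≤ y) (hyn : y ≤ n - 1)
    (hyap : ∀ g ∈ tup n F, ¬(g.1 < y ∧ y < g.2))
    (hpair : ((0, y) : PairN) ∉ F) :
    2 ≤ ((env n F).filter (fun g => g.2 ≤ y)).card := by
  classical
  have hmxT : ∀ e ∈ tup n F, e.1 < e.2 := fun e he => (tup_spec hF e he).1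
  have hsp1 : ((0, 1) : PairN) ∈ tup n F := mem_union_right _ (mem_spn (by omega))
  have hsp2 : ((y - 1, y) : PairN) ∈ tup n F := by
    have h := mem_spn (n := n) (x := y - 1) (by omega)
    rw [show y - 1 + 1 = y by omega] at h
    exact mem_union_right _ h
  obtain ⟨g1, hg1, h1a, h1b⟩ := exists_max_above hmxT hsp1
  obtain ⟨g2, hg2, h2a, h2b⟩ := exists_max_above hmxT hsp2
  have hg1T := tup_spec hF g1 (maxIn_subset hg1)
  have hg2T := tup_spec hF g2 (maxIn_subset hg2)
  have h1a' : g1.1 ≤ 0 := h1a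
  have h1b' : 1 ≤ g1.2 := h1b
  have h2a' : g2.1 ≤ y - 1 := h2a
  have h2b' : y ≤ g2.2 := h2b
  have hg1y : g1.2 ≤ y := by
    by_contra hcon
    exact hyap g1 (maxIn_subset hg1) ⟨by omega, by omega⟩
  have hg2y : g2.2 ≤ y := by
    by_contra hcon
    exact hyap g2 (maxIn_subset hg2) ⟨by omega, by omega⟩
  have hne : g1 ≠ g2 := by
    intro hEq
    rw [← hEq] at h2a' h2b'
    have hg1pair : g1 = ((0, y) : PairN) := Prod.ext (by omega) (by omega)
    rcases mem_union.mp (maxIn_subset hg1) with hcmem | hcmem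
    · rw [hg1pair] at hcmem; exact hpair hcmem
    · have := spn_spec hcmem; omega
  have m1 : g1 ∈ (env n F).filter (fun g => g.2 ≤ y) := mem_filter.mpr ⟨hg1, by omega⟩
  have m2 : g2 ∈ (env n F).filter (fun g => g.2 ≤ y) := mem_filter.mpr ⟨hg2, by omega⟩
  exact Finset.one_lt_card.mpr ⟨g1, m1, g2, m2, hne⟩


theorem master (n : ℕ) (hn : 3 ≤ n) (A B C : Finset PairN) (a b p : PairN → ℕ)
    (hA : Rng n A) (hB : Rng n B) (hC : Rng n C)
    (hAB : Disjoint A B) (hAC : Disjoint A C) (hBC : Disjoint B C)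
    (hAcr : ∀ α ∈ A, ∀ α' ∈ A, ¬(α.1 < α'.1 ∧ α'.1 < α.2 ∧ α.2 < α'.2))
    (hBcr : ∀ β ∈ B, ∀ β' ∈ B, ¬(β.1 < β'.1 ∧ β'.1 < β.2 ∧ β.2 < β'.2))
    (hAap : ∀ α ∈ A, ∀ e ∈ C, ¬(α.1 < a e ∧ a e < α.2))
    (hBap : ∀ β ∈ B, ∀ e ∈ C, ¬(β.1 < b e ∧ b e < β.2))
    (hUray : ∀ e ∈ C, ∀ f ∈ C, ¬(a e < a f ∧ p e < p f))
    (hLray : ∀ e ∈ C, ∀ f ∈ C, ¬(b e < b f ∧ p e < p f))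
    (hpinj : ∀ e ∈ C, ∀ f ∈ C, p e = p f → e = f)
    (hab : ∀ e ∈ C, (a e = e.1 ∧ b e = e.2) ∨ (a e = e.2 ∧ b e = e.1)) :
    A.card + B.card + C.card ≤ 2 * n - 5 := by
  classical
  have hAapT : ∀ e ∈ C, ∀ g ∈ tup n A, ¬(g.1 < a e ∧ a e < g.2) := by
    intro e he g hg
    rcases mem_union.mp hg with h | h
    · exact hAap g h e he
    · have := spn_spec h; omega
  have hBapT : ∀ e ∈ C, ∀ g ∈ tup n B, ¬(g.1 < b e ∧ b e < g.2) := by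
    intro e he g hg
    rcases mem_union.mp hg with h | h
    · exact hBap g h e he
    · have := spn_spec h; omega
  have hamono : ∀ e ∈ C, ∀ f ∈ C, p f < p e → a e ≤ a f := by
    intro e he f hf hpf
    by_contra hcon
    exact hUray f hf e he ⟨by omega, hpf⟩
  have hbmono : ∀ e ∈ C, ∀ f ∈ C, p f < p e → b e ≤ b f := by
    intro e he f hf hpf
    by_contra hcon
    exact hLray f hf e he ⟨by omega, hpf⟩
  have habne : ∀ e ∈ C, ∀ f ∈ C, a e = a f → b e = b f → e = f := by
    intro e he f hf h1 h2
    have he' := hC e he; have hf' := hC f hf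
    rcases hab e he with ⟨ha1, hb1⟩ | ⟨ha1, hb1⟩ <;> rcases hab f hf with ⟨ha2, hb2⟩ | ⟨ha2, hb2⟩ <;>
      exact Prod.ext (by omega) (by omega)
  have habrng : ∀ e ∈ C, a e ≤ n - 1 ∧ b e ≤ n - 1 := by
    intro e he
    have := hC e he
    rcases hab e he with ⟨ha1, hb1⟩ | ⟨ha1, hb1⟩ <;> omega
  -- sum lower bounds from the A- and B-faces
  have hSA : 2 * A.card ≤ ∑ α ∈ A, (mx n A α).card := by
    calc 2 * A.card = A.card • 2 := by rw [smul_eq_mul]; ring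
      _ ≤ ∑ α ∈ A, (mx n A α).card :=
        Finset.card_nsmul_le_sum A _ 2 (fun α hα => mx_two hA hα)
  have hSB : 2 * B.card ≤ ∑ β ∈ B, (mx n B β).card := by
    calc 2 * B.card = B.card • 2 := by rw [smul_eq_mul]; ring
      _ ≤ ∑ β ∈ B, (mx n B β).card :=
        Finset.card_nsmul_le_sum B _ 2 (fun β hβ => mx_two hB hβ)
  have hdA : ∀ α ∈ A, ∀ α' ∈ A, α ≠ α' → Disjoint (mx n A α) (mx n A α') :=
    fun α hα α' hα' h => mx_disj hA hAcr hα hα' h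
  have hdB : ∀ β ∈ B, ∀ β' ∈ B, β ≠ β' → Disjoint (mx n B β) (mx n B β') :=
    fun β hβ β' hβ' h => mx_disj hB hBcr hβ hβ' h
  by_cases hCne : C.Nonempty
  · -- C nonempty case
    obtain ⟨eS, heS, heSmax⟩ := C.exists_max_image p hCne
    obtain ⟨eM, heM, heMmin⟩ := C.exists_min_image p hCne
    set Cb : PairN → Finset PairN := fun e => C.filter (fun f => p f < p e) with hCb
    have hprd : ∀ e : PairN, ∃ g : PairN, (Cb e).Nonempty → (g ∈ Cb e ∧ ∀ f ∈ Cb e, p f ≤ p g) := by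
      intro e
      by_cases h : (Cb e).Nonempty
      · obtain ⟨g, hg, hm⟩ := (Cb e).exists_max_image p h
        exact ⟨g, fun _ => ⟨hg, hm⟩⟩
      · exact ⟨(0,0), fun h' => absurd h' h⟩
    choose prd hprdspec using hprd
    set nxa : PairN → ℕ := fun e => if (Cb e).Nonempty then a (prd e) else n - 1 with hnxa
    set nxb : PairN → ℕ := fun e => if (Cb e).Nonempty then b (prd e) else n - 1 with hnxb
    set U0 : Finset PairN := (env n A).filter (fun g => g.2 ≤ a eS) with hU0
    set L0 : Finset PairN := (env n B).filter (fun g => g.2 ≤ b eS) with hL0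
    set Uf : PairN → Finset PairN :=
      fun e => (env n A).filter (fun g => a e ≤ g.1 ∧ g.2 ≤ nxa e) with hUf
    set Lf : PairN → Finset PairN :=
      fun e => (env n B).filter (fun g => b e ≤ g.1 ∧ g.2 ≤ nxb e) with hLf
    have hprdC : ∀ e, (Cb e).Nonempty → prd e ∈ C ∧ p (prd e) < p e := by
      intro e h
      have hmem := (hprdspec e h).1
      simp only [hCb, mem_filter] at hmem
      exact hmem
    have hstar : ∀ e ∈ C, a eS ≤ a e ∧ b eS ≤ b e := by
      intro e he
      rcases eq_or_ne e eS with rfl | hne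
      · exact ⟨le_rfl, le_rfl⟩
      · have h1 : p e ≤ p eS := heSmax e he
        have h2 : p e ≠ p eS := fun h => hne (hpinj e he eS heS h)
        exact ⟨hamono eS heS e he (by omega), hbmono eS heS e he (by omega)⟩
    have hCbM : ¬ (Cb eM).Nonempty := by
      rintro ⟨g, hg⟩
      simp only [hCb, mem_filter] at hg
      have := heMmin g hg.1
      omega
    have hsep : ∀ e ∈ C, ∀ f ∈ C, p f < p e → nxa e ≤ a f ∧ nxb e ≤ b f := by
      intro e he f hf hpf
      have hne : (Cb e).Nonempty := ⟨f, by simp only [hCb, mem_filter]; exact ⟨hf, hpf⟩⟩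
      have hsp := hprdspec e hne
      have hprdmem : prd e ∈ C := (hprdC e hne).1
      have hfle : p f ≤ p (prd e) := hsp.2 f (by simp only [hCb, mem_filter]; exact ⟨hf, hpf⟩)
      have hnxa_eq : nxa e = a (prd e) := by simp only [hnxa]; rw [if_pos hne]
      have hnxb_eq : nxb e = b (prd e) := by simp only [hnxb]; rw [if_pos hne]
      rcases eq_or_lt_of_le hfle with hEq | hLt
      · have hfeq : f = prd e := hpinj f hf (prd e) hprdmem hEq
        rw [hnxa_eq, hnxb_eq, ← hfeq]
        exact ⟨le_rfl, le_rfl⟩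
      · exact ⟨hnxa_eq ▸ hamono (prd e) hprdmem f hf hLt,
          hnxb_eq ▸ hbmono (prd e) hprdmem f hf hLt⟩
    -- disjointness of upper pieces
    have hUfdisj : ∀ e ∈ C, ∀ f ∈ C, e ≠ f → Disjoint (Uf e) (Uf f) := by
      have key : ∀ e ∈ C, ∀ f ∈ C, p f < p e → Disjoint (Uf e) (Uf f) := by
        intro e he f hf hpf
        rw [Finset.disjoint_left]
        intro g hg hg'
        simp only [hUf, mem_filter] at hg hg'
        have hgT := tup_spec hA g (maxIn_subset hg.1)
        have hss := (hsep e he f hf hpf).1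
        omega
      intro e he f hf hne
      have hpne : p e ≠ p f := fun h => hne (hpinj e he f hf h)
      rcases lt_or_gt_of_ne hpne with h | h
      · exact (key f hf e he h).symm
      · exact key e he f hf h
    have hLfdisj : ∀ e ∈ C, ∀ f ∈ C, e ≠ f → Disjoint (Lf e) (Lf f) := by
      have key : ∀ e ∈ C, ∀ f ∈ C, p f < p e → Disjoint (Lf e) (Lf f) := by
        intro e he f hf hpf
        rw [Finset.disjoint_left]
        intro g hg hg'
        simp only [hLf, mem_filter] at hg hg'
        have hgT := tup_spec hB g (maxIn_subset hg.1)
        have hss := (hsep e he f hf hpf).2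
        omega
      intro e he f hf hne
      have hpne : p e ≠ p f := fun h => hne (hpinj e he f hf h)
      rcases lt_or_gt_of_ne hpne with h | h
      · exact (key f hf e he h).symm
      · exact key e he f hf h
    have hU0disj : ∀ e ∈ C, Disjoint U0 (Uf e) := by
      intro e he; rw [disjoint_left]; intro g hg hg'
      simp only [hU0, mem_filter] at hg
      simp only [hUf, mem_filter] at hg'
      have hgT := tup_spec hA g (maxIn_subset hg.1)
      have := (hstar e he).1
      omega
    have hL0disj : ∀ e ∈ C, Disjoint L0 (Lf e) := by
      intro e he; rw [disjoint_left]; intro g hg hg'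
      simp only [hL0, mem_filter] at hg
      simp only [hLf, mem_filter] at hg'
      have hgT := tup_spec hB g (maxIn_subset hg.1)
      have := (hstar e he).2
      omega
    -- the upper incidence-count bound
    have hsum1 : (∑ α ∈ A, (mx n A α).card) + (U0.card + ∑ e ∈ C, (Uf e).card)
        ≤ n - 1 + A.card := by
      have hb1 : ∑ α ∈ A, (mx n A α).card = (A.biUnion (mx n A)).card := (card_biUnion hdA).symm
      have hb2 : ∑ e ∈ C, (Uf e).card = (C.biUnion Uf).card := (card_biUnion hUfdisj).symm
      have hd3 : Disjoint U0 (C.biUnion Uf) := by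
        rw [Finset.disjoint_biUnion_right]
        exact fun e he => hU0disj e he
      have hd4 : Disjoint (A.biUnion (mx n A)) (U0 ∪ C.biUnion Uf) := by
        rw [disjoint_left]; intro g hg hg'
        obtain ⟨α, hα, hgα⟩ := mem_biUnion.mp hg
        have henv : g ∈ env n A := by
          rcases mem_union.mp hg' with h | h
          · simp only [hU0, mem_filter] at h; exact h.1
          · obtain ⟨e, he, hge⟩ := mem_biUnion.mp h
            simp only [hUf, mem_filter] at hge; exact hge.1
        exact mx_ne_env hα hgα henv
      have hsub : (A.biUnion (mx n A)) ∪ (U0 ∪ C.biUnion Uf) ⊆ tup n A := by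
        intro g hg
        rcases mem_union.mp hg with h | h
        · obtain ⟨α, hα, hgα⟩ := mem_biUnion.mp h
          exact mx_subset_tup hgα
        · rcases mem_union.mp h with h' | h'
          · simp only [hU0, mem_filter] at h'; exact maxIn_subset h'.1
          · obtain ⟨e, he, hge⟩ := mem_biUnion.mp h'
            simp only [hUf, mem_filter] at hge; exact maxIn_subset hge.1
      calc (∑ α ∈ A, (mx n A α).card) + (U0.card + ∑ e ∈ C, (Uf e).card)
          = (A.biUnion (mx n A)).card + (U0.card + (C.biUnion Uf).card) := by rw [hb1, hb2]
        _ = (A.biUnion (mx n A)).card + (U0 ∪ C.biUnion Uf).card := by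
            rw [card_union_of_disjoint hd3]
        _ = ((A.biUnion (mx n A)) ∪ (U0 ∪ C.biUnion Uf)).card :=
            (card_union_of_disjoint hd4).symm
        _ ≤ (tup n A).card := card_le_card hsub
        _ = n - 1 + A.card := card_tup hA
    have hsum2 : (∑ β ∈ B, (mx n B β).card) + (L0.card + ∑ e ∈ C, (Lf e).card)
        ≤ n - 1 + B.card := by
      have hb1 : ∑ β ∈ B, (mx n B β).card = (B.biUnion (mx n B)).card := (card_biUnion hdB).symm
      have hb2 : ∑ e ∈ C, (Lf e).card = (C.biUnion Lf).card := (card_biUnion hLfdisj).symm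
      have hd3 : Disjoint L0 (C.biUnion Lf) := by
        rw [Finset.disjoint_biUnion_right]
        exact fun e he => hL0disj e he
      have hd4 : Disjoint (B.biUnion (mx n B)) (L0 ∪ C.biUnion Lf) := by
        rw [disjoint_left]; intro g hg hg'
        obtain ⟨β, hβ, hgβ⟩ := mem_biUnion.mp hg
        have henv : g ∈ env n B := by
          rcases mem_union.mp hg' with h | h
          · simp only [hL0, mem_filter] at h; exact h.1
          · obtain ⟨e, he, hge⟩ := mem_biUnion.mp h
            simp only [hLf, mem_filter] at hge; exact hge.1
        exact mx_ne_env hβ hgβ henv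
      have hsub : (B.biUnion (mx n B)) ∪ (L0 ∪ C.biUnion Lf) ⊆ tup n B := by
        intro g hg
        rcases mem_union.mp hg with h | h
        · obtain ⟨β, hβ, hgβ⟩ := mem_biUnion.mp h
          exact mx_subset_tup hgβ
        · rcases mem_union.mp h with h' | h'
          · simp only [hL0, mem_filter] at h'; exact maxIn_subset h'.1
          · obtain ⟨e, he, hge⟩ := mem_biUnion.mp h'
            simp only [hLf, mem_filter] at hge; exact maxIn_subset hge.1
      calc (∑ β ∈ B, (mx n B β).card) + (L0.card + ∑ e ∈ C, (Lf e).card)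
          = (B.biUnion (mx n B)).card + (L0.card + (C.biUnion Lf).card) := by rw [hb1, hb2]
        _ = (B.biUnion (mx n B)).card + (L0 ∪ C.biUnion Lf).card := by
            rw [card_union_of_disjoint hd3]
        _ = ((B.biUnion (mx n B)) ∪ (L0 ∪ C.biUnion Lf)).card :=
            (card_union_of_disjoint hd4).symm
        _ ≤ (tup n B).card := card_le_card hsub
        _ = n - 1 + B.card := card_tup hB
    -- outermost wrap face
    have hW0 : 2 ≤ U0.card + L0.card := by
      have hCeS := hC eS heS
      by_cases haz : a eS = 0
      · -- upper apex of top edge at the very left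
        have hcomp : a eS = eS.1 ∧ b eS = eS.2 := by
          rcases hab eS heS with ⟨h1, h2⟩ | ⟨h1, h2⟩
          · exact ⟨h1, h2⟩
          · omega
        have h2L : 2 ≤ ((env n B).filter (fun g => g.2 ≤ b eS)).card := by
          apply env_witness₂L hB (y := b eS) (by omega) (by omega) (hBapT eS heS)
          intro hmem
          have hEq : ((0, b eS) : PairN) = eS := Prod.ext (by omega) (by omega)
          rw [hEq] at hmem
          exact (disjoint_left.mp hBC hmem) heS
        rw [← hL0] at h2L
        omega
      · by_cases hbz : b eS = 0
        · have hcomp : a eS = eS.2 ∧ b eS = eS.1 := by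
            rcases hab eS heS with ⟨h1, h2⟩ | ⟨h1, h2⟩
            · omega
            · exact ⟨h1, h2⟩
          have h2U : 2 ≤ ((env n A).filter (fun g => g.2 ≤ a eS)).card := by
            apply env_witness₂L hA (y := a eS) (by omega) (by omega) (hAapT eS heS)
            intro hmem
            have hEq : ((0, a eS) : PairN) = eS := Prod.ext (by omega) (by omega)
            rw [hEq] at hmem
            exact (disjoint_left.mp hAC hmem) heS
          rw [← hU0] at h2U
          omega
        · -- both apexes positive: one witness on each side
          have hrng := habrng eS heS
          obtain ⟨g1, hg1, -, hg1b⟩ := env_witness hA (x := 0) (y := a eS)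
            (by omega) (by omega) (Or.inl rfl) (Or.inr (hAapT eS heS))
          obtain ⟨g2, hg2, -, hg2b⟩ := env_witness hB (x := 0) (y := b eS)
            (by omega) (by omega) (Or.inl rfl) (Or.inr (hBapT eS heS))
          have m1 : g1 ∈ U0 := by simp only [hU0, mem_filter]; exact ⟨hg1, hg1b⟩
          have m2 : g2 ∈ L0 := by simp only [hL0, mem_filter]; exact ⟨hg2, hg2b⟩
          have := card_pos.mpr ⟨g1, m1⟩
          have := card_pos.mpr ⟨g2, m2⟩
          omega
    -- middle wrap faces
    have hmid : ∀ e ∈ C, (Cb e).Nonempty → 1 ≤ (Uf e).card + (Lf e).card := by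
      intro e he hne
      obtain ⟨hprdmem, hprdlt⟩ := hprdC e hne
      have ha_le : a e ≤ a (prd e) := hamono e he (prd e) hprdmem hprdlt
      have hb_le : b e ≤ b (prd e) := hbmono e he (prd e) hprdmem hprdlt
      have hnxa_eq : nxa e = a (prd e) := by simp only [hnxa]; rw [if_pos hne]
      have hnxb_eq : nxb e = b (prd e) := by simp only [hnxb]; rw [if_pos hne]
      have hne' : e ≠ prd e := by
        intro h
        have : p (prd e) = p e := by rw [← h]
        omega
      have hor : a e < a (prd e) ∨ b e < b (prd e) := by
        rcases eq_or_lt_of_le ha_le with h1 | h1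
        · rcases eq_or_lt_of_le hb_le with h2 | h2
          · exact absurd (habne e he (prd e) hprdmem h1 h2) hne'
          · exact Or.inr h2
        · exact Or.inl h1
      rcases hor with h1 | h1
      · have hyn : a (prd e) ≤ n - 1 := (habrng (prd e) hprdmem).1
        obtain ⟨g, hg, hga, hgb⟩ := env_witness hA h1 hyn
          (Or.inr (hAapT e he)) (Or.inr (hAapT (prd e) hprdmem))
        have hmem : g ∈ Uf e := by
          simp only [hUf, mem_filter]
          exact ⟨hg, hga, by omega⟩
        have := card_pos.mpr ⟨g, hmem⟩
        omega
      · have hyn : b (prd e) ≤ n - 1 := (habrng (prd e) hprdmem).2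
        obtain ⟨g, hg, hga, hgb⟩ := env_witness hB h1 hyn
          (Or.inr (hBapT e he)) (Or.inr (hBapT (prd e) hprdmem))
        have hmem : g ∈ Lf e := by
          simp only [hLf, mem_filter]
          exact ⟨hg, hga, by omega⟩
        have := card_pos.mpr ⟨g, hmem⟩
        omega
    -- innermost wrap face
    have hend : ∀ e ∈ C, ¬(Cb e).Nonempty → 2 ≤ (Uf e).card + (Lf e).card := by
      intro e he hne
      have hnxa_eq : nxa e = n - 1 := by simp only [hnxa]; rw [if_neg hne]
      have hnxb_eq : nxb e = n - 1 := by simp only [hnxb]; rw [if_neg hne]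
      have hCe := hC e he
      by_cases han : a e = n - 1
      · have hcomp : b e = e.1 ∧ a e = e.2 := by
          rcases hab e he with ⟨h1, h2⟩ | ⟨h1, h2⟩ <;> constructor <;> omega
        have h2L : 2 ≤ ((env n B).filter (fun g => b e ≤ g.1 ∧ g.2 ≤ n - 1)).card := by
          apply env_witness₂R hB (x := b e) (by omega) (hBapT e he)
          intro hmem
          have hEq : ((b e, n-1) : PairN) = e := Prod.ext (by omega) (by omega)
          rw [hEq] at hmem
          exact (disjoint_left.mp hBC hmem) he
        have hfeq : (env n B).filter (fun g => b e ≤ g.1 ∧ g.2 ≤ n - 1) = Lf e := by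
          simp only [hLf, hnxb_eq]
        rw [hfeq] at h2L
        omega
      · by_cases hbn : b e = n - 1
        · have hcomp : a e = e.1 ∧ b e = e.2 := by
            rcases hab e he with ⟨h1, h2⟩ | ⟨h1, h2⟩ <;> constructor <;> omega
          have h2U : 2 ≤ ((env n A).filter (fun g => a e ≤ g.1 ∧ g.2 ≤ n - 1)).card := by
            apply env_witness₂R hA (x := a e) (by omega) (hAapT e he)
            intro hmem
            have hEq : ((a e, n-1) : PairN) = e := Prod.ext (by omega) (by omega)
            rw [hEq] at hmem
            exact (disjoint_left.mp hAC hmem) he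
          have hfeq : (env n A).filter (fun g => a e ≤ g.1 ∧ g.2 ≤ n - 1) = Uf e := by
            simp only [hUf, hnxa_eq]
          rw [hfeq] at h2U
          omega
        · have hrng := habrng e he
          obtain ⟨g1, hg1, hg1a, hg1b⟩ := env_witness hA (x := a e) (y := n - 1)
            (by omega) le_rfl (Or.inr (hAapT e he)) (Or.inl rfl)
          obtain ⟨g2, hg2, hg2a, hg2b⟩ := env_witness hB (x := b e) (y := n - 1)
            (by omega) le_rfl (Or.inr (hBapT e he)) (Or.inl rfl)
          have m1 : g1 ∈ Uf e := by
            simp only [hUf, mem_filter]; exact ⟨hg1, hg1a, by omega⟩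
          have m2 : g2 ∈ Lf e := by
            simp only [hLf, mem_filter]; exact ⟨hg2, hg2a, by omega⟩
          have := card_pos.mpr ⟨g1, m1⟩
          have := card_pos.mpr ⟨g2, m2⟩
          omega
    -- face sum lower bound
    have hfaces : 3 * C.card ≤
        (∑ e ∈ C, (if (Cb e).Nonempty then 2 else 1)) +
          ((∑ e ∈ C, (Uf e).card) + (∑ e ∈ C, (Lf e).card)) := by
      have hterm : ∀ e ∈ C,
          3 ≤ (if (Cb e).Nonempty then 2 else 1) + ((Uf e).card + (Lf e).card) := by
        intro e he
        by_cases h : (Cb e).Nonempty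
        · have := hmid e he h; rw [if_pos h]; omega
        · have := hend e he h; rw [if_neg h]; omega
      calc 3 * C.card = C.card • 3 := by rw [smul_eq_mul]; ring
        _ ≤ ∑ e ∈ C, ((if (Cb e).Nonempty then 2 else 1) + ((Uf e).card + (Lf e).card)) :=
            Finset.card_nsmul_le_sum C _ 3 hterm
        _ = _ := by rw [Finset.sum_add_distrib, Finset.sum_add_distrib]
    -- c-incidence upper bound
    have hindle : (∑ e ∈ C, (if (Cb e).Nonempty then 2 else 1)) + 1 ≤ 2 * C.card := by
      have hsplit : ∀ e ∈ C,
          (if (Cb e).Nonempty then 2 else 1) = 1 + (if (Cb e).Nonempty then 1 else 0) := by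
        intro e _; by_cases h : (Cb e).Nonempty <;> simp [h]
      rw [Finset.sum_congr rfl hsplit, Finset.sum_add_distrib]
      have hbool : (∑ e ∈ C, (if (Cb e).Nonempty then 1 else 0))
          = (C.filter (fun e => (Cb e).Nonempty)).card := by
        rw [Finset.sum_boole, Nat.cast_id]
      rw [hbool]
      have hsub : C.filter (fun e => (Cb e).Nonempty) ⊆ C.erase eM := by
        intro e hememb
        have h1 := mem_filter.mp hememb
        refine mem_erase.mpr ⟨?_, h1.1⟩
        intro h; rw [h] at h1; exact hCbM h1.2
      have hcle := card_le_card hsub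
      have hcer : (C.erase eM).card = C.card - 1 := card_erase_of_mem heM
      have hm1 : 1 ≤ C.card := card_pos.mpr hCne
      simp only [Finset.sum_const, smul_eq_mul, mul_one]
      omega
    have hm1 : 1 ≤ C.card := card_pos.mpr hCne
    omega
  · -- C empty case
    have hC0 : C.card = 0 := by
      rw [not_nonempty_iff_eq_empty.mp hCne]; rfl
    have hsum1 : (∑ α ∈ A, (mx n A α).card) + (env n A).card ≤ n - 1 + A.card := by
      have hb1 : ∑ α ∈ A, (mx n A α).card = (A.biUnion (mx n A)).card := (card_biUnion hdA).symm
      have hd4 : Disjoint (A.biUnion (mx n A)) (env n A) := by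
        rw [disjoint_left]; intro g hg hg'
        obtain ⟨α, hα, hgα⟩ := mem_biUnion.mp hg
        exact mx_ne_env hα hgα hg'
      have hsub : (A.biUnion (mx n A)) ∪ env n A ⊆ tup n A := by
        intro g hg
        rcases mem_union.mp hg with h | h
        · obtain ⟨α, hα, hgα⟩ := mem_biUnion.mp h
          exact mx_subset_tup hgα
        · exact maxIn_subset h
      calc (∑ α ∈ A, (mx n A α).card) + (env n A).card
          = (A.biUnion (mx n A)).card + (env n A).card := by rw [hb1]
        _ = ((A.biUnion (mx n A)) ∪ env n A).card := (card_union_of_disjoint hd4).symm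
        _ ≤ (tup n A).card := card_le_card hsub
        _ = n - 1 + A.card := card_tup hA
    have hsum2 : (∑ β ∈ B, (mx n B β).card) + (env n B).card ≤ n - 1 + B.card := by
      have hb1 : ∑ β ∈ B, (mx n B β).card = (B.biUnion (mx n B)).card := (card_biUnion hdB).symm
      have hd4 : Disjoint (B.biUnion (mx n B)) (env n B) := by
        rw [disjoint_left]; intro g hg hg'
        obtain ⟨β, hβ, hgβ⟩ := mem_biUnion.mp hg
        exact mx_ne_env hβ hgβ hg'
      have hsub : (B.biUnion (mx n B)) ∪ env n B ⊆ tup n B := by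
        intro g hg
        rcases mem_union.mp hg with h | h
        · obtain ⟨β, hβ, hgβ⟩ := mem_biUnion.mp h
          exact mx_subset_tup hgβ
        · exact maxIn_subset h
      calc (∑ β ∈ B, (mx n B β).card) + (env n B).card
          = (B.biUnion (mx n B)).card + (env n B).card := by rw [hb1]
        _ = ((B.biUnion (mx n B)) ∪ env n B).card := (card_union_of_disjoint hd4).symm
        _ ≤ (tup n B).card := card_le_card hsub
        _ = n - 1 + B.card := card_tup hB
    have henv3 : 3 ≤ (env n A).card + (env n B).card := by
      have hmxA : ∀ e ∈ tup n A, e.1 < e.2 := fun e he => (tup_spec hA e he).1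
      have hmxB : ∀ e ∈ tup n B, e.1 < e.2 := fun e he => (tup_spec hB e he).1
      have h01A : ((0, 1) : PairN) ∈ tup n A := mem_union_right _ (mem_spn (by omega))
      have h01B : ((0, 1) : PairN) ∈ tup n B := mem_union_right _ (mem_spn (by omega))
      have hn2A : ((n-2, n-1) : PairN) ∈ tup n A := by
        have h := mem_spn (n := n) (x := n-2) (by omega)
        rw [show n - 2 + 1 = n - 1 by omega] at h
        exact mem_union_right _ h
      have hn2B : ((n-2, n-1) : PairN) ∈ tup n B := by
        have h := mem_spn (n := n) (x := n-2) (by omega)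
        rw [show n - 2 + 1 = n - 1 by omega] at h
        exact mem_union_right _ h
      obtain ⟨gA1, hgA1, hA1a, hA1b⟩ := exists_max_above hmxA h01A
      obtain ⟨gA2, hgA2, hA2a, hA2b⟩ := exists_max_above hmxA hn2A
      obtain ⟨gB1, hgB1, hB1a, hB1b⟩ := exists_max_above hmxB h01B
      obtain ⟨gB2, hgB2, hB2a, hB2b⟩ := exists_max_above hmxB hn2B
      by_cases hA12 : gA1 = gA2
      · by_cases hB12 : gB1 = gB2
        · exfalso
          have hA1T := tup_spec hA gA1 (maxIn_subset hgA1)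
          have hB1T := tup_spec hB gB1 (maxIn_subset hgB1)
          rw [← hA12] at hA2a hA2b
          rw [← hB12] at hB2a hB2b
          have hA1a' : gA1.1 ≤ 0 := hA1a
          have hB1a' : gB1.1 ≤ 0 := hB1a
          have hApair : gA1 = ((0, n-1) : PairN) := Prod.ext (by omega) (by omega)
          have hBpair : gB1 = ((0, n-1) : PairN) := Prod.ext (by omega) (by omega)
          have hAmem : gA1 ∈ A := by
            rcases mem_union.mp (maxIn_subset hgA1) with hcm | hcm
            · exact hcm
            · have := spn_spec hcm; rw [hApair] at this; simp at this; omega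
          have hBmem : gB1 ∈ B := by
            rcases mem_union.mp (maxIn_subset hgB1) with hcm | hcm
            · exact hcm
            · have := spn_spec hcm; rw [hBpair] at this; simp at this; omega
          rw [hApair] at hAmem
          rw [hBpair] at hBmem
          exact (disjoint_left.mp hAB hAmem) hBmem
        · have h1 : 1 < (env n B).card := Finset.one_lt_card.mpr ⟨gB1, hgB1, gB2, hgB2, hB12⟩
          have h2 : 0 < (env n A).card := card_pos.mpr ⟨gA1, hgA1⟩
          omega
      · have h1 : 1 < (env n A).card := Finset.one_lt_card.mpr ⟨gA1, hgA1, gA2, hgA2, hA12⟩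
        have h2 : 0 < (env n B).card := card_pos.mpr ⟨gB1, hgB1⟩
        omega
    omega

end DequeAux

/-- Let `n ≥ 3`. If the complete graph `K_n` admits a deque layout with `k`
deques, then `k ≥ (n² - 3n + 2)/(4n - 10)` over the rationals. -/
theorem complete_deque_lower_bound (n k : ℕ) (hn : 3 ≤ n)
    (h : HasDequeLayout (⊤ : SimpleGraph (Fin n)) k) :
    ((n : ℚ) ^ 2 - 3 * n + 2) / (4 * n - 10) ≤ (k : ℚ) := by
  classical
  obtain ⟨f, c, hc⟩ := h
  have hS : (Finset.univ.image f).card = n := by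
    rw [Finset.card_image_of_injective _ f.injective, Finset.card_univ, Fintype.card_fin]
  set σ := (Finset.univ.image f).orderIsoOfFin hS with hσ
  set u : ℕ → ℕ := fun i => if hi : i < n then (σ ⟨i, hi⟩ : ℕ) else 0 with hu
  have humono : ∀ {i j : ℕ}, i < n → j < n → (u i < u j ↔ i < j) := by
    intro i j hi hj
    simp only [hu]
    rw [dif_pos hi, dif_pos hj, Subtype.coe_lt_coe, OrderIso.lt_iff_lt]
    exact Fin.mk_lt_mk
  have humem : ∀ i, i < n → u i ∈ Finset.univ.image f := by
    intro i hi
    simp only [hu]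
    rw [dif_pos hi]
    exact (σ ⟨i, hi⟩).2
  have huinj : ∀ {i j : ℕ}, i < n → j < n → u i = u j → i = j := by
    intro i j hi hj hEq
    rcases lt_trichotomy i j with hl | hl | hl
    · have := (humono hi hj).mpr hl; omega
    · exact hl
    · have := (humono hj hi).mpr hl; omega
  set uu : ℕ × ℕ → ℕ × ℕ := fun q => (u q.1, u q.2) with huu
  set L : Finset (ℕ × ℕ) := (Finset.range n ×ˢ Finset.range n).filter (fun q => q.1 + 2 ≤ q.2)
    with hL
  have hLmem : ∀ q ∈ L, q.1 < n ∧ q.2 < n ∧ q.1 + 2 ≤ q.2 := by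
    intro q hq
    simp only [hL, Finset.mem_filter, Finset.mem_product, Finset.mem_range] at hq
    exact ⟨hq.1.1, hq.1.2, hq.2⟩
  have hedge : ∀ q ∈ L, uu q ∈ orderedEdges (⊤ : SimpleGraph (Fin n)) f := by
    intro q hq
    obtain ⟨h1, h2, h3⟩ := hLmem q hq
    obtain ⟨v, -, hv⟩ := Finset.mem_image.mp (humem q.1 h1)
    obtain ⟨w, -, hw⟩ := Finset.mem_image.mp (humem q.2 h2)
    have hlt : u q.1 < u q.2 := (humono h1 h2).mpr (by omega)
    refine ⟨v, w, ?_, hv, hw, hlt⟩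
    rw [SimpleGraph.top_adj]
    intro hEq
    rw [hEq, hw] at hv
    omega
  have hvlt : ∀ x y : ℕ, (vtx x : Ext ℕ) < vtx y ↔ x < y := fun x y => Sum.Lex.inl_lt_inl_iff
  have hvw : ∀ x m : ℕ, (vtx x : Ext ℕ) < wpt m := fun x m => Sum.Lex.inl_lt_inr x m
  have hwlt : ∀ m m' : ℕ, (wpt m : Ext ℕ) < wpt m' ↔ m < m' := fun m m' => Sum.Lex.inr_lt_inr_iff
  have hcolor : ∀ i : Fin k, (L.filter (fun q => c (uu q) = i)).card ≤ 2 * n - 5 := by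
    intro i
    obtain ⟨typ, wrap, hinj, hup, hlow⟩ := hc i
    set Li := L.filter (fun q => c (uu q) = i) with hLi
    have hLiE : ∀ q ∈ Li,
        uu q ∈ {p : ℕ × ℕ | p ∈ orderedEdges (⊤ : SimpleGraph (Fin n)) f ∧ c p = i} := by
      intro q hq
      have h1 := Finset.mem_filter.mp hq
      exact ⟨hedge q h1.1, h1.2⟩
    set A := Li.filter (fun q => typ (uu q) = EdgeType.hh) with hA'
    set B := Li.filter (fun q => typ (uu q) = EdgeType.tt) with hB'
    set C := Li.filter (fun q => typ (uu q) = EdgeType.ht ∨ typ (uu q) = EdgeType.th) with hC'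
    set aq : ℕ × ℕ → ℕ := fun q => if typ (uu q) = EdgeType.ht then q.1 else q.2 with haq
    set bq : ℕ × ℕ → ℕ := fun q => if typ (uu q) = EdgeType.ht then q.2 else q.1 with hbq
    set pq : ℕ × ℕ → ℕ := fun q => wrap (uu q) with hpq
    have hALi : A ⊆ Li := Finset.filter_subset _ _
    have hBLi : B ⊆ Li := Finset.filter_subset _ _
    have hCLi : C ⊆ Li := Finset.filter_subset _ _
    have hLiL : Li ⊆ L := Finset.filter_subset _ _
    have hLirng : ∀ q ∈ Li, q.1 < n ∧ q.2 < n ∧ q.1 + 2 ≤ q.2 := fun q hq => hLmem q (hLiL hq)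
    have hupA : ∀ q ∈ A, upperIv typ wrap (uu q) = some (vtx (u q.1), vtx (u q.2)) := by
      intro q hq
      have ht := (Finset.mem_filter.mp hq).2
      simp only [huu] at ht
      simp [upperIv, ht, huu]
    have hloB : ∀ q ∈ B, lowerIv typ wrap (uu q) = some (vtx (u q.1), vtx (u q.2)) := by
      intro q hq
      have ht := (Finset.mem_filter.mp hq).2
      simp only [huu] at ht
      simp [lowerIv, ht, huu]
    have hivC : ∀ q ∈ C, upperIv typ wrap (uu q) = some (vtx (u (aq q)), wpt (pq q)) ∧
        lowerIv typ wrap (uu q) = some (vtx (u (bq q)), wpt (pq q)) := by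
      intro q hq
      rcases (Finset.mem_filter.mp hq).2 with ht | ht <;> simp only [huu] at ht <;>
        exact ⟨by simp [upperIv, ht, huu, haq, hpq], by simp [lowerIv, ht, huu, hbq, hpq]⟩
    have htypC : ∀ q ∈ C, typ (uu q) = EdgeType.ht ∨ typ (uu q) = EdgeType.th :=
      fun q hq => (Finset.mem_filter.mp hq).2
    have haqr : ∀ q ∈ C, aq q < n ∧ bq q < n := by
      intro q hq
      have := hLirng q (hCLi hq)
      constructor
      · simp only [haq]; split <;> omega
      · simp only [hbq]; split <;> omega
    have hAr : DequeAux.Rng n A := by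
      intro α hα; have := hLirng α (hALi hα); omega
    have hBr : DequeAux.Rng n B := by
      intro β hβ; have := hLirng β (hBLi hβ); omega
    have hCr : DequeAux.Rng n C := by
      intro e he; have := hLirng e (hCLi he); omega
    have hdAB : Disjoint A B := by
      rw [Finset.disjoint_left]; intro q hq hq'
      have h1 := (Finset.mem_filter.mp hq).2
      have h2 := (Finset.mem_filter.mp hq').2
      rw [h1] at h2; exact EdgeType.noConfusion h2
    have hdAC : Disjoint A C := by
      rw [Finset.disjoint_left]; intro q hq hq'
      have h1 := (Finset.mem_filter.mp hq).2
      rcases (Finset.mem_filter.mp hq').2 with h2 | h2 <;>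
        (rw [h1] at h2; exact EdgeType.noConfusion h2)
    have hdBC : Disjoint B C := by
      rw [Finset.disjoint_left]; intro q hq hq'
      have h1 := (Finset.mem_filter.mp hq).2
      rcases (Finset.mem_filter.mp hq').2 with h2 | h2 <;>
        (rw [h1] at h2; exact EdgeType.noConfusion h2)
    have hAcr : ∀ α ∈ A, ∀ α' ∈ A, ¬(α.1 < α'.1 ∧ α'.1 < α.2 ∧ α.2 < α'.2) := by
      intro α hα α' hα' hcon
      obtain ⟨hc1, hc2, hc3⟩ := hcon
      have hr := hLirng α (hALi hα)
      have hr' := hLirng α' (hALi hα')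
      have hni := hup (uu α) (hLiE α (hALi hα)) (uu α') (hLiE α' (hALi hα'))
        (vtx (u α.1), vtx (u α.2)) (by rw [hupA α hα]; rfl)
        (vtx (u α'.1), vtx (u α'.2)) (by rw [hupA α' hα']; rfl)
      exact hni ⟨(hvlt _ _).mpr ((humono (by omega) (by omega)).mpr hc1),
        (hvlt _ _).mpr ((humono (by omega) (by omega)).mpr hc2),
        (hvlt _ _).mpr ((humono (by omega) (by omega)).mpr hc3)⟩
    have hBcr : ∀ β ∈ B, ∀ β' ∈ B, ¬(β.1 < β'.1 ∧ β'.1 < β.2 ∧ β.2 < β'.2) := by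
      intro β hβ β' hβ' hcon
      obtain ⟨hc1, hc2, hc3⟩ := hcon
      have hr := hLirng β (hBLi hβ)
      have hr' := hLirng β' (hBLi hβ')
      have hni := hlow (uu β) (hLiE β (hBLi hβ)) (uu β') (hLiE β' (hBLi hβ'))
        (vtx (u β.1), vtx (u β.2)) (by rw [hloB β hβ]; rfl)
        (vtx (u β'.1), vtx (u β'.2)) (by rw [hloB β' hβ']; rfl)
      exact hni ⟨(hvlt _ _).mpr ((humono (by omega) (by omega)).mpr hc1),
        (hvlt _ _).mpr ((humono (by omega) (by omega)).mpr hc2),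
        (hvlt _ _).mpr ((humono (by omega) (by omega)).mpr hc3)⟩
    have hApx : ∀ α ∈ A, ∀ e ∈ C, ¬(α.1 < aq e ∧ aq e < α.2) := by
      intro α hα e he hcon
      have hr := hLirng α (hALi hα)
      have hq := (haqr e he).1
      have hni := hup (uu α) (hLiE α (hALi hα)) (uu e) (hLiE e (hCLi he))
        (vtx (u α.1), vtx (u α.2)) (by rw [hupA α hα]; rfl)
        (vtx (u (aq e)), wpt (pq e)) (by rw [(hivC e he).1]; rfl)
      exact hni ⟨(hvlt _ _).mpr ((humono (by omega) hq).mpr hcon.1),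
        (hvlt _ _).mpr ((humono hq (by omega)).mpr hcon.2), hvw _ _⟩
    have hBpx : ∀ β ∈ B, ∀ e ∈ C, ¬(β.1 < bq e ∧ bq e < β.2) := by
      intro β hβ e he hcon
      have hr := hLirng β (hBLi hβ)
      have hq := (haqr e he).2
      have hni := hlow (uu β) (hLiE β (hBLi hβ)) (uu e) (hLiE e (hCLi he))
        (vtx (u β.1), vtx (u β.2)) (by rw [hloB β hβ]; rfl)
        (vtx (u (bq e)), wpt (pq e)) (by rw [(hivC e he).2]; rfl)
      exact hni ⟨(hvlt _ _).mpr ((humono (by omega) hq).mpr hcon.1),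
        (hvlt _ _).mpr ((humono hq (by omega)).mpr hcon.2), hvw _ _⟩
    have hUray : ∀ e ∈ C, ∀ e' ∈ C, ¬(aq e < aq e' ∧ pq e < pq e') := by
      intro e he e' he' hcon
      have h1 := (haqr e he).1
      have h2 := (haqr e' he').1
      have hni := hup (uu e) (hLiE e (hCLi he)) (uu e') (hLiE e' (hCLi he'))
        (vtx (u (aq e)), wpt (pq e)) (by rw [(hivC e he).1]; rfl)
        (vtx (u (aq e')), wpt (pq e')) (by rw [(hivC e' he').1]; rfl)
      exact hni ⟨(hvlt _ _).mpr ((humono h1 h2).mpr hcon.1), hvw _ _, (hwlt _ _).mpr hcon.2⟩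
    have hLray : ∀ e ∈ C, ∀ e' ∈ C, ¬(bq e < bq e' ∧ pq e < pq e') := by
      intro e he e' he' hcon
      have h1 := (haqr e he).2
      have h2 := (haqr e' he').2
      have hni := hlow (uu e) (hLiE e (hCLi he)) (uu e') (hLiE e' (hCLi he'))
        (vtx (u (bq e)), wpt (pq e)) (by rw [(hivC e he).2]; rfl)
        (vtx (u (bq e')), wpt (pq e')) (by rw [(hivC e' he').2]; rfl)
      exact hni ⟨(hvlt _ _).mpr ((humono h1 h2).mpr hcon.1), hvw _ _, (hwlt _ _).mpr hcon.2⟩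
    have hpinjq : ∀ e ∈ C, ∀ e' ∈ C, pq e = pq e' → e = e' := by
      intro e he e' he' hEq
      have hre := hLirng e (hCLi he)
      have hrf := hLirng e' (hCLi he')
      have huuEq := hinj (uu e) (hLiE e (hCLi he)) (uu e') (hLiE e' (hCLi he'))
        (htypC e he) (htypC e' he') hEq
      have h1 : u e.1 = u e'.1 := congrArg Prod.fst huuEq
      have h2 : u e.2 = u e'.2 := congrArg Prod.snd huuEq
      exact Prod.ext (huinj (by omega) (by omega) h1) (huinj (by omega) (by omega) h2)
    have habq : ∀ e ∈ C, (aq e = e.1 ∧ bq e = e.2) ∨ (aq e = e.2 ∧ bq e = e.1) := by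
      intro e he
      by_cases hq : typ (uu e) = EdgeType.ht
      · left; constructor <;> simp [haq, hbq, hq]
      · right; constructor <;> simp [haq, hbq, hq]
    have hpart : A.card + B.card + C.card = Li.card := by
      have hunion : A ∪ B ∪ C = Li := by
        ext q
        simp only [hA', hB', hC', Finset.mem_union, Finset.mem_filter]
        constructor
        · rintro ((⟨hq, -⟩ | ⟨hq, -⟩) | ⟨hq, -⟩) <;> exact hq
        · intro hq
          cases htq : typ (uu q) with
          | hh => exact Or.inl (Or.inl ⟨hq, rfl⟩)
          | tt => exact Or.inl (Or.inr ⟨hq, rfl⟩)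
          | ht => exact Or.inr ⟨hq, Or.inl rfl⟩
          | th => exact Or.inr ⟨hq, Or.inr rfl⟩
      have hdisj2 : Disjoint (A ∪ B) C := by
        rw [Finset.disjoint_union_left]; exact ⟨hdAC, hdBC⟩
      rw [← hunion, Finset.card_union_of_disjoint hdisj2, Finset.card_union_of_disjoint hdAB]
    rw [← hpart]
    exact DequeAux.master n hn A B C aq bq pq hAr hBr hCr hdAB hdAC hdBC hAcr hBcr hApx hBpx
      hUray hLray hpinjq habq
  -- global counting
  have hLcard : 2 * L.card = (n - 1) * (n - 2) := by
    have hbi : L = (Finset.range n).biUnion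
        (fun j => (Finset.range (j - 1)).image (fun i => (i, j))) := by
      ext q
      simp only [hL, Finset.mem_filter, Finset.mem_product, Finset.mem_range, Finset.mem_biUnion,
        Finset.mem_image]
      constructor
      · rintro ⟨⟨h1, h2⟩, h3⟩
        exact ⟨q.2, h2, q.1, by omega, Prod.mk.eta⟩
      · rintro ⟨j, hj, i, hi, rfl⟩
        refine ⟨⟨?_, ?_⟩, ?_⟩ <;> simp <;> omega
    have hcard1 : L.card = ∑ j ∈ Finset.range n, (j - 1) := by
      rw [hbi, Finset.card_biUnion]
      · refine Finset.sum_congr rfl ?_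
        intro j hj
        rw [Finset.card_image_of_injective _
          (fun x y hxy => by simpa using congrArg Prod.fst hxy), Finset.card_range]
      · intro x hx y hy hxy
        rw [Function.onFun, Finset.disjoint_left]
        rintro q hqx hqy
        simp only [Finset.mem_image] at hqx hqy
        obtain ⟨i1, -, rfl⟩ := hqx
        obtain ⟨i2, -, hi2⟩ := hqy
        exact hxy (congrArg Prod.snd hi2).symm
    have hsum : ∀ m : ℕ, 2 * (∑ j ∈ Finset.range m, (j - 1)) = (m - 1) * (m - 2) := by
      intro m
      induction m with
      | zero => simp
      | succ mm ih =>
        rw [Finset.sum_range_succ, Nat.mul_add, ih]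
        rcases mm with _ | mm'
        · simp
        · rcases mm' with _ | mm''
          · simp
          · show (mm'' + 1) * mm'' + 2 * (mm'' + 1) = (mm'' + 2) * (mm'' + 1)
            ring
    rw [hcard1, hsum]
  have hsum_colors : ∑ i : Fin k, (L.filter (fun q => c (uu q) = i)).card = L.card :=
    (Finset.card_eq_sum_card_fiberwise (fun q _ => Finset.mem_univ (c (uu q)))).symm
  have htot : (n - 1) * (n - 2) ≤ k * (4 * n - 10) := by
    have h1 : L.card ≤ k * (2 * n - 5) := by
      calc L.card = ∑ i : Fin k, (L.filter (fun q => c (uu q) = i)).card := hsum_colors.symm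
        _ ≤ Finset.univ.card • (2 * n - 5) :=
            Finset.sum_le_card_nsmul _ _ _ (fun i _ => hcolor i)
        _ = k * (2 * n - 5) := by rw [smul_eq_mul, Finset.card_univ, Fintype.card_fin]
    calc (n - 1) * (n - 2) = 2 * L.card := hLcard.symm
      _ ≤ 2 * (k * (2 * n - 5)) := by omega
      _ = k * (2 * (2 * n - 5)) := by ring
      _ = k * (4 * n - 10) := by rw [show 2 * (2 * n - 5) = 4 * n - 10 by omega]
  have hnq : (3 : ℚ) ≤ (n : ℚ) := by exact_mod_cast hn
  rw [div_le_iff₀ (by linarith)]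
  have hc1 : ((n - 1 : ℕ) : ℚ) = (n : ℚ) - 1 := by
    rw [Nat.cast_sub (by omega)]; norm_num
  have hc2 : ((n - 2 : ℕ) : ℚ) = (n : ℚ) - 2 := by
    rw [Nat.cast_sub (by omega)]; norm_num
  have hc3 : ((4 * n - 10 : ℕ) : ℚ) = 4 * (n : ℚ) - 10 := by
    rw [Nat.cast_sub (by omega)]; push_cast; ring
  have hcast := (Nat.cast_le (α := ℚ)).mpr htot
  rw [Nat.cast_mul, Nat.cast_mul, hc1, hc2, hc3] at hcast
  have hexp : ((n : ℚ) - 1) * ((n : ℚ) - 2) = (n : ℚ) ^ 2 - 3 * n + 2 := by ring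
  linarith

end DequePaper
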